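/- Let Π be a collection of prime filters of a residuated lattice and F a filter contained in ⋂Π. If Π is F-closed (for any distinct P1, P2 ∈ Π there exist a1 ∉ P1 and a2 ∉ P2 with a1 ∨ a2 ∈ F), then every prime filter Q with ⋂Π ⊆ Q ⊆ P for some P ∈ Π is contained in a unique element of Π; in particular Π is an antichain. -/
import Mathlib


universe u

class ResiduatedLattice (A : Type u) extends Lattice A, BoundedOrder A where
  mul : A → A → A
  himp : A → A → A
  mul_comm : ∀ x y : A, mul x y = mul y x
  mul_assoc : ∀ x y z : A, mul (mul x y) z = mul x (mul y z)
  mul_top : ∀ x : A, mul x ⊤ = x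
  adjoint : ∀ x y z : A, mul x y ≤ z ↔ x ≤ himp y z

namespace RL

variable {A : Type u} [ResiduatedLattice A]

/-- A filter: a nonempty subset closed under the monoid operation `⊙` and closed
under joins with arbitrary elements. -/
def IsFilter (F : Set A) : Prop :=
  F.Nonempty ∧ (∀ x ∈ F, ∀ y ∈ F, ResiduatedLattice.mul x y ∈ F) ∧
    (∀ x ∈ F, ∀ y : A, x ⊔ y ∈ F)

/-- A prime filter: a proper filter such that `x ⊔ y ∈ P` implies `x ∈ P` or `y ∈ P`. -/
def IsPrime (P : Set A) : Prop :=
  IsFilter P ∧ P ≠ Set.univ ∧ ∀ x y : A, x ⊔ y ∈ P → x ∈ P ∨ y ∈ P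

/-- The filter generated by a subset `X`. -/
def Fgen (X : Set A) : Set A := ⋂₀ {G : Set A | IsFilter G ∧ X ⊆ G}

/-- An `X`-minimal prime filter: a minimal element of the set of prime filters containing `X`. -/
def MinPrimeOver (X : Set A) (P : Set A) : Prop :=
  IsPrime P ∧ X ⊆ P ∧ ∀ Q : Set A, IsPrime Q → X ⊆ Q → Q ⊆ P → Q = P

/-- A minimal prime filter. -/
def MinPrime (P : Set A) : Prop :=
  IsPrime P ∧ ∀ Q : Set A, IsPrime Q → Q ⊆ P → Q = P

/-- The coannihilator of `X` belonging to `F`. -/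
def coann (F : Set A) (X : Set A) : Set A := {a : A | ∀ x ∈ X, x ⊔ a ∈ F}

/-- `X^⊥ = {a | x ⊔ a = ⊤ for all x ∈ X}`. -/
def perp (X : Set A) : Set A := {a : A | ∀ x ∈ X, x ⊔ a = ⊤}

/-- `D_F(P) = {a | (F : a) ⊄ P}`. -/
def DF (F P : Set A) : Set A := {a : A | ¬ coann F {a} ⊆ P}

/-- A `∨`-closed subset: nonempty and closed under joins. -/
def VClosed (C : Set A) : Prop := C.Nonempty ∧ ∀ x ∈ C, ∀ y ∈ C, x ⊔ y ∈ C

end RL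

theorem Fclosed_unique_and_antichain {A : Type u} [ResiduatedLattice A]
    (𝔓 : Set (Set A)) (h𝔓 : ∀ P ∈ 𝔓, RL.IsPrime P)
    (F : Set A) (hF : RL.IsFilter F) (hF𝔓 : F ⊆ ⋂₀ 𝔓)
    (hclosed : ∀ P1 ∈ 𝔓, ∀ P2 ∈ 𝔓, P1 ≠ P2 →
      ∃ a1 ∉ P1, ∃ a2 ∉ P2, a1 ⊔ a2 ∈ F) :
    (∀ Q : Set A, RL.IsPrime Q → ⋂₀ 𝔓 ⊆ Q → (∃ P ∈ 𝔓, Q ⊆ P) →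
      ∃! P : Set A, P ∈ 𝔓 ∧ Q ⊆ P) ∧
    IsAntichain (· ⊆ ·) 𝔓 := by
  constructor
  · rintro Q hQ hQsub ⟨P, hP, hQP⟩
    refine ⟨P, ⟨hP, hQP⟩, ?_⟩
    rintro P' ⟨hP', hQP'⟩
    by_contra hne
    obtain ⟨a1, ha1, a2, ha2, hjoin⟩ := hclosed P' hP' P hP hne
    have : a1 ⊔ a2 ∈ Q := hQsub (hF𝔓 hjoin)
    rcases hQ.2.2 _ _ this with h | h
    · exact ha1 (hQP' h)
    · exact ha2 (hQP h)
  · rintro P1 hP1 P2 hP2 hne hsub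
    obtain ⟨a1, ha1, a2, ha2, hjoin⟩ := hclosed P1 hP1 P2 hP2 hne
    have hm : a1 ⊔ a2 ∈ P1 := (hF𝔓 hjoin) P1 hP1
    rcases (h𝔓 P1 hP1).2.2 _ _ hm with h | h
    · exact ha1 h
    · exact ha2 (hsub h)
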